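/- If T is a bounded operator on H, R a bounded operator on K, and there exists a bounded transformation X : H → K with dense range such that XT = RX, then the multiplicity of R is at most the multiplicity of T. -/

import Mathlib

/- STATEMENT 2: If `X : H → K` is bounded with dense range and `XT = RX`
(i.e. `T ≻d R`), then `μ_R ≤ μ_T`. -/

noncomputable section
namespace Paper

variable {H K : Type} [NormedAddCommGroup H] [InnerProductSpace ℂ H] [CompleteSpace H]
  [NormedAddCommGroup K] [InnerProductSpace ℂ K] [CompleteSpace K]

/-- The smallest closed `T`-invariant subspace containing all the `x i`. -/
def orbitClosure {E : Type} [NormedAddCommGroup E] [InnerProductSpace ℂ E]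
    (T : E →L[ℂ] E) {ι : Type} (x : ι → E) : Submodule ℂ E :=
  (Submodule.span ℂ {y | ∃ (i : ι) (j : ℕ), y = (T ^ j) (x i)}).topologicalClosure

/-- The multiplicity `μ_T`: the minimal number of vectors whose `T`-orbit spans the space. -/
def multiplicity {E : Type} [NormedAddCommGroup E] [InnerProductSpace ℂ E]
    (T : E →L[ℂ] E) : Cardinal :=
  sInf {c : Cardinal | ∃ (ι : Type) (x : ι → E), orbitClosure T x = ⊤ ∧ c = Cardinal.mk ι}

theorem statement2 [TopologicalSpace.SeparableSpace H] [TopologicalSpace.SeparableSpace K]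
    (T : H →L[ℂ] H) (R : K →L[ℂ] K) (X : H →L[ℂ] K)
    (hX : DenseRange X) (hXTR : X.comp T = R.comp X) :
    multiplicity R ≤ multiplicity T := by
  have hpow : ∀ (j : ℕ) (v : H), X ((T ^ j) v) = (R ^ j) (X v) := by
    intro j
    induction j with
    | zero => intro v; simp
    | succ n ih =>
      intro v
      have h1 : (T ^ (n + 1)) v = (T ^ n) (T v) := by
        rw [pow_succ]; rfl
      have h2 : (R ^ (n + 1)) (X v) = (R ^ n) (R (X v)) := by
        rw [pow_succ]; rfl
      have h3 : X (T v) = R (X v) := congrFun (congrArg DFunLike.coe hXTR) v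
      rw [h1, ih (T v), h3, h2]
  apply csInf_le_csInf (OrderBot.bddBelow _)
  · exact ⟨Cardinal.mk H, H, id, by
      rw [orbitClosure, Submodule.eq_top_iff']
      intro v
      apply Submodule.le_topologicalClosure
      exact Submodule.subset_span ⟨v, 0, by simp⟩, rfl⟩
  · rintro c ⟨ι, x, hx, rfl⟩
    refine ⟨ι, fun i => X (x i), ?_, rfl⟩
    set S := {y | ∃ (i : ι) (j : ℕ), y = (T ^ j) (x i)}
    set S' := {y | ∃ (i : ι) (j : ℕ), y = (R ^ j) (X (x i))}
    have himg : X '' S ⊆ S' := by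
      rintro _ ⟨y, ⟨i, j, rfl⟩, rfl⟩
      exact ⟨i, j, hpow j (x i)⟩
    have hspan : (Submodule.span ℂ S).map (X : H →ₗ[ℂ] K) ≤ Submodule.span ℂ S' := by
      rw [Submodule.map_span]
      exact Submodule.span_mono himg
    have hdenseT : Dense ((Submodule.span ℂ S : Submodule ℂ H) : Set H) :=
      Submodule.dense_iff_topologicalClosure_eq_top.mpr hx
    have hrange : Set.range X ⊆ closure ((Submodule.span ℂ S' : Submodule ℂ K) : Set K) := by
      rintro _ ⟨v, rfl⟩
      have hv : v ∈ closure ((Submodule.span ℂ S : Submodule ℂ H) : Set H) :=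
        hdenseT v
      have : X v ∈ X '' closure ((Submodule.span ℂ S : Submodule ℂ H) : Set H) :=
        ⟨v, hv, rfl⟩
      have h2 := image_closure_subset_closure_image X.continuous this
      refine closure_mono ?_ h2
      intro y hy
      rcases hy with ⟨w, hw, rfl⟩
      exact hspan ⟨w, hw, rfl⟩
    have hdense : Dense ((Submodule.span ℂ S' : Submodule ℂ K) : Set K) := by
      rw [← dense_closure]
      exact hX.mono hrange
    exact Submodule.dense_iff_topologicalClosure_eq_top.mp hdense

end Paper
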